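/- Let α₃, α₄ ∈ ℤ[√2] be coprime with α₃ > 0, let s > 0, β₁, β₂ ∈ ℤ[√2], v = v(β₁,β₂) and δ = −α₄β₁ + α₃β₂. Let h = h(x₁,x₂,y₁,y₂,θ₁,θ₂) with x₁, x₂ ∈ ℝ, y₁, y₂ > 0, θ₁, θ₂ ∈ ℝ, and set u₁ = (α₃x₁ + α₄)/(α₃y₁²), u₂ = (σ(α₃)x₂ + σ(α₄))/(σ(α₃)y₂²), and B = α₃y₁·π₂(λ^{−2r}T(s)·k(−θ₁)n(−u₁)) × σ(α₃)y₂·π₂(λ^{2r}𝒲·k(−θ₂)n(−u₂)), where π₂ : ℝ² → ℝ is projection onto the second coordinate. Then Π_v·h ∩ 𝒯(s) = ∅ if and only if (δ, σ(δ)) ∉ B. -/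

import Mathlib

open MeasureTheory Matrix Set Pointwise

noncomputable section

/-- The real embedding of `ℤ[√2]`, `a + b√2 ↦ a + b√2`. -/
def emb (α : Zsqrtd 2) : ℝ := (α.re : ℝ) + (α.im : ℝ) * Real.sqrt 2

/-- The Galois-conjugate embedding `σ`, `a + b√2 ↦ a − b√2`. -/
def embc (α : Zsqrtd 2) : ℝ := (α.re : ℝ) - (α.im : ℝ) * Real.sqrt 2

/-- The fundamental unit `λ = 1 + √2`. -/
def lam : ℝ := 1 + Real.sqrt 2

/-- `𝓛'`: the Minkowski embedding of `ℤ[√2]` in `ℝ²`. -/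
def Lp : Set (ℝ × ℝ) := {p | ∃ α : Zsqrtd 2, p = (emb α, embc α)}

/-- `v(β₁,β₂) = (β₁, β₂, σ(β₁), σ(β₂))`. -/
def latvec (β₁ β₂ : Zsqrtd 2) : Fin 4 → ℝ := ![emb β₁, emb β₂, embc β₁, embc β₂]

/-- `𝓛`: the Minkowski embedding of `ℤ[√2]²` in `ℝ⁴`. -/
def Lquad : Set (Fin 4 → ℝ) := {v | ∃ β₁ β₂ : Zsqrtd 2, v = latvec β₁ β₂}

/-- `𝓛h`, for a 4×4 real matrix `h` (row vectors, right multiplication). -/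
def latimage (h : Matrix (Fin 4) (Fin 4) ℝ) : Set (Fin 4 → ℝ) :=
  (fun v => Matrix.vecMul v h) '' Lquad

def nmat (x : ℝ) : Matrix (Fin 2) (Fin 2) ℝ := !![1, x; 0, 1]
def amat (y : ℝ) : Matrix (Fin 2) (Fin 2) ℝ := !![y, 0; 0, y⁻¹]
def kmat (θ : ℝ) : Matrix (Fin 2) (Fin 2) ℝ :=
  !![Real.cos θ, -Real.sin θ; Real.sin θ, Real.cos θ]

/-- Block diagonal 4×4 matrix from two 2×2 blocks. -/
def bd (A B : Matrix (Fin 2) (Fin 2) ℝ) : Matrix (Fin 4) (Fin 4) ℝ :=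
  !![A 0 0, A 0 1, 0, 0;
     A 1 0, A 1 1, 0, 0;
     0, 0, B 0 0, B 0 1;
     0, 0, B 1 0, B 1 1]

/-- `h(x₁,x₂,y₁,y₂,θ₁,θ₂) = diag(n(x₁)a(y₁)k(θ₁), n(x₂)a(y₂)k(θ₂))`. -/
def hmat (x₁ x₂ y₁ y₂ θ₁ θ₂ : ℝ) : Matrix (Fin 4) (Fin 4) ℝ :=
  bd (nmat x₁ * amat y₁ * kmat θ₁) (nmat x₂ * amat y₂ * kmat θ₂)

/-- `H = SL₂(ℝ)² ⊂ SL₄(ℝ)` (block diagonal). -/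
def Hset : Set (Matrix (Fin 4) (Fin 4) ℝ) :=
  {h | ∃ A B : Matrix (Fin 2) (Fin 2) ℝ, A.det = 1 ∧ B.det = 1 ∧ h = bd A B}

/-- `Γ_K = {diag(A, σ(A)) : A ∈ SL₂(ℤ[√2])}`. -/
def GammaK : Set (Matrix (Fin 4) (Fin 4) ℝ) :=
  {g | ∃ A : Matrix (Fin 2) (Fin 2) (Zsqrtd 2), A.det = 1 ∧ g = bd (A.map emb) (A.map embc)}

/-- `𝒲`: the open regular octagon of side length √2. -/
def Woct : Set (ℝ × ℝ) :=
  {p | |p.1| < lam / Real.sqrt 2 ∧ |p.2| < lam / Real.sqrt 2 ∧ |p.1| + |p.2| < lam}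

/-- `𝒲' = 𝒲 ∖ (√2−1)𝒲`. -/
def Wp : Set (ℝ × ℝ) := Woct \ ((Real.sqrt 2 - 1) • Woct)

/-- `θ̂ = 48√2/π⁴`, the density of visible points. -/
def thetaHat : ℝ := 48 * Real.sqrt 2 / Real.pi ^ 4

/-- `T(s)`: open triangle with vertices `(0,0)`, `(s/θ̂)^{1/2}(1,±1)`. -/
def Tset (s : ℝ) : Set (ℝ × ℝ) :=
  {p | 0 < p.1 ∧ p.1 < Real.sqrt (s / thetaHat) ∧ |p.2| < p.1}

/-- `𝔉`: a fundamental domain of `𝓛'`. -/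
def Fdom : Set (ℝ × ℝ) :=
  {p | ∃ r₁ ∈ Set.Ico (0:ℝ) 1, ∃ r₂ ∈ Set.Ico (0:ℝ) 1,
    p = (1 + r₁ + r₂ * Real.sqrt 2, 2 + r₁ - r₂ * Real.sqrt 2)}

/-- The Siegel domain `𝔇_t`. -/
def Dset (t : ℝ) : Set (Matrix (Fin 4) (Fin 4) ℝ) :=
  {h | ∃ x₁ x₂ y₁ y₂ θ₁ θ₂ : ℝ, (x₁, x₂) ∈ Fdom ∧ 0 < y₁ ∧ 0 < y₂ ∧ t ≤ y₁ * y₂ ∧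
    lam ^ (-2 : ℤ) ≤ y₁ / y₂ ∧ y₁ / y₂ ≤ lam ^ 2 ∧
    θ₁ ∈ Set.Ico 0 Real.pi ∧ θ₂ ∈ Set.Ico 0 Real.pi ∧ h = hmat x₁ x₂ y₁ y₂ θ₁ θ₂}

/-- Row vector times 2×2 matrix, on `ℝ × ℝ`. -/
def mul2 (p : ℝ × ℝ) (M : Matrix (Fin 2) (Fin 2) ℝ) : ℝ × ℝ :=
  (p.1 * M 0 0 + p.2 * M 1 0, p.1 * M 0 1 + p.2 * M 1 1)

/-- `r(s)`: the unique integer with `λ^{2r} ≤ s^{1/4} < λ^{2(r+1)}`. -/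
def rr (s : ℝ) : ℤ := ⌊Real.logb (lam ^ 2) (s ^ ((1:ℝ)/4))⌋

/-- `𝒯(s)` with explicit integer `r`: `λ^{−2r}T(s) × λ^{2r}𝒲`. -/
def calT (s : ℝ) (r : ℤ) : Set (Fin 4 → ℝ) :=
  {v | (lam ^ (2*r) * v 0, lam ^ (2*r) * v 1) ∈ Tset s ∧
       (lam ^ (-(2*r)) * v 2, lam ^ (-(2*r)) * v 3) ∈ Woct}

/-- `𝒯(s) = λ^{−2r(s)}T(s) × λ^{2r(s)}𝒲`. -/
def calTs (s : ℝ) : Set (Fin 4 → ℝ) := calT s (rr s)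

/-- Euclidean norm on `ℝ⁴`. -/
def enorm4 (v : Fin 4 → ℝ) : ℝ := Real.sqrt (∑ i, (v i) ^ 2)

/-- `𝓛h̃ = (ℤ(y₁,0,y₂,0) + ℤ√2(y₁,0,−y₂,0) + ℝ(0,1,0,0) + ℝ(0,0,0,1))·diag(k(θ₁),k(θ₂))`. -/
def Ltilde (y₁ y₂ θ₁ θ₂ : ℝ) : Set (Fin 4 → ℝ) :=
  {v | ∃ (m n : ℤ) (c₁ c₂ : ℝ),
    v = Matrix.vecMul ![((m:ℝ) + (n:ℝ) * Real.sqrt 2) * y₁, c₁,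
          ((m:ℝ) - (n:ℝ) * Real.sqrt 2) * y₂, c₂] (bd (kmat θ₁) (kmat θ₂))}

open Classical in
/-- Real-valued indicator of a proposition. -/
def ind (P : Prop) : ℝ := if P then 1 else 0

/-- `c_H = 3/π⁴`. -/
def cH : ℝ := 3 / Real.pi ^ 4

/-- `Y_t = {(y₁,y₂) : y₁,y₂ > 0, y₁y₂ ≥ t, y₁/y₂ ∈ (λ⁻²,λ²)}`. -/
def Yt (t : ℝ) : Set (ℝ × ℝ) :=
  {y | 0 < y.1 ∧ 0 < y.2 ∧ t ≤ y.1 * y.2 ∧ lam ^ (-2:ℤ) < y.1 / y.2 ∧ y.1 / y.2 < lam ^ 2}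

/-- The main term `G_M(s)` (depending on the Siegel-domain parameter `t`). -/
def GM (t s : ℝ) : ℝ :=
  cH * ∫ θ₂ in Set.Ico (0:ℝ) Real.pi, ∫ θ₁ in Set.Ico (0:ℝ) Real.pi, ∫ y in Yt t, ∫ x in Fdom,
    (y.1 ^ 3 * y.2 ^ 3)⁻¹ * ind (Ltilde y.1 y.2 θ₁ θ₂ ∩ calTs s = ∅)

/-- The error term `G_E(s)`. -/
def GE (t s : ℝ) : ℝ :=
  cH * ∫ θ₂ in Set.Ico (0:ℝ) Real.pi, ∫ θ₁ in Set.Ico (0:ℝ) Real.pi, ∫ y in Yt t, ∫ x in Fdom,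
    (y.1 ^ 3 * y.2 ^ 3)⁻¹ *
      ind (latimage (hmat x.1 x.2 y.1 y.2 θ₁ θ₂) ∩ calTs s = ∅ ∧
           (Ltilde y.1 y.2 θ₁ θ₂ ∩ calTs s).Nonempty)

/-- `J = [0,π/4] ∪ [3π/4,π)`. -/
def Jset : Set ℝ := Set.Icc 0 (Real.pi/4) ∪ Set.Ico (3*Real.pi/4) Real.pi

/-- `Y = {(y₁,y₂) : y₁ > 0, 1 < y₂ < λ²}`. -/
def Yset : Set (ℝ × ℝ) := {y | 0 < y.1 ∧ 1 < y.2 ∧ y.2 < lam ^ 2}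

/-- `T₁`: open triangle with vertices `(0,0)`, `(1,±1)`. -/
def T1 : Set (ℝ × ℝ) := {p | 0 < p.1 ∧ p.1 < 1 ∧ |p.2| < p.1}

/-- `ℓ₁(θ₁)`: first-coordinate projection of `θ̂^{−1/2}T₁k(−θ₁)`. -/
def ell1 (θ₁ : ℝ) : Set ℝ :=
  {x | ∃ p ∈ T1, x = (mul2 ((Real.sqrt thetaHat)⁻¹ • p) (kmat (-θ₁))).1}

/-- `ℓ₂(θ₂)`: first-coordinate projection of `𝒲k(−θ₂)`. -/
def ell2 (θ₂ : ℝ) : Set ℝ := {x | ∃ p ∈ Woct, x = (mul2 p (kmat (-θ₂))).1}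

/-- `C_𝒫 = 2304(2−√2)/π⁸`. -/
def CP : ℝ := 2304 * (2 - Real.sqrt 2) / Real.pi ^ 8

/-- `ζ_K(2) = π⁴/(48√2)`. -/
def zetaK2 : ℝ := Real.pi ^ 4 / (48 * Real.sqrt 2)

/-- `𝒯'(s) = T(s) × 𝒲`. -/
def Tprime (s : ℝ) : Set (Fin 4 → ℝ) :=
  {v | (v 0, v 1) ∈ Tset s ∧ (v 2, v 3) ∈ Woct}

/-- `L₁(θ₁)` from Lemma 3.4: projection of `λ^{−2r}T(s)k(−θ₁)` onto the x-axis. -/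
def L1set (s : ℝ) (r : ℤ) (θ₁ : ℝ) : Set ℝ :=
  {x | ∃ p ∈ Tset s, x = (mul2 ((lam ^ (-(2*r)) : ℝ) • p) (kmat (-θ₁))).1}

/-- `L₂(θ₂)`: projection of `λ^{2r}𝒲k(−θ₂)` onto the x-axis. -/
def L2set (r : ℤ) (θ₂ : ℝ) : Set ℝ :=
  {x | ∃ p ∈ Woct, x = (mul2 ((lam ^ (2*r) : ℝ) • p) (kmat (-θ₂))).1}

/-- `n(x)a(y)k(θ)` where `y,θ` are determined by `y⁻¹(sin θ, cos θ) = z`. -/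
def hz (z : ℝ × ℝ) (x : ℝ) : Matrix (Fin 2) (Fin 2) ℝ :=
  nmat x * amat (Real.sqrt (z.1 ^ 2 + z.2 ^ 2))⁻¹ *
    !![(Real.sqrt (z.1 ^ 2 + z.2 ^ 2))⁻¹ * z.2, -((Real.sqrt (z.1 ^ 2 + z.2 ^ 2))⁻¹ * z.1);
       (Real.sqrt (z.1 ^ 2 + z.2 ^ 2))⁻¹ * z.1, (Real.sqrt (z.1 ^ 2 + z.2 ^ 2))⁻¹ * z.2]

/-- The function `F₂` of Lemma 4.7. -/
def F2 (z₁ : ℝ) : ℝ :=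
  (24 / Real.pi ^ 4) * ∫ z₂ in Set.Ioo (-z₁) z₁, ∫ w in Wp, ∫ x in Fdom,
    ind (latimage (bd (hz (z₁, z₂) x.1) (hz w x.2)) ∩ Tprime (z₁ ^ 2 * thetaHat) = ∅)

/-- The box `B(α₃,α₄)`. -/
def Bbox (α₃ α₄ : Zsqrtd 2) (C₁ s : ℝ) : Set (ℝ × ℝ) :=
  {x | |x.1 + emb α₄ / emb α₃| ≤ C₁ / Real.sqrt s ∧
       |x.2 + embc α₄ / embc α₃| ≤ C₁ / Real.sqrt s}

/-- The matrix `h` determined by `s, z₂, w, x₁, x₂` via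
`y₁⁻¹(sin θ₁, cos θ₁) = λ^{−2r}(θ̂^{−1/2}s^{1/2}, z₂)`, `y₂⁻¹(sin θ₂, cos θ₂) = λ^{2r}w`. -/
def hfull (s z₂ : ℝ) (w : ℝ × ℝ) (x₁ x₂ : ℝ) : Matrix (Fin 4) (Fin 4) ℝ :=
  bd (hz ((lam ^ (-(2 * rr s)) : ℝ) • (Real.sqrt (s / thetaHat), z₂)) x₁)
     (hz ((lam ^ (2 * rr s) : ℝ) • w) x₂)

/-- `F⁺_{(α₃,α₄)}(s)`. -/
def Fplus (α₃ α₄ : Zsqrtd 2) (C₁ s : ℝ) : ℝ :=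
  (Real.sqrt s)⁻¹ * ∫ z₂ in Set.Ioo (0:ℝ) (Real.sqrt (s / thetaHat)), ∫ w in Wp,
    ∫ x in Bbox α₃ α₄ C₁ s, ind (latimage (hfull s z₂ w x.1 x.2) ∩ calTs s = ∅)

/-- `F⁻_{(α₃,α₄)}(s)`. -/
def Fminus (α₃ α₄ : Zsqrtd 2) (C₁ s : ℝ) : ℝ :=
  (Real.sqrt s)⁻¹ * ∫ z₂ in Set.Ioo (-Real.sqrt (s / thetaHat)) (0:ℝ), ∫ w in Wp,
    ∫ x in Bbox α₃ α₄ C₁ s, ind (latimage (hfull s z₂ w x.1 x.2) ∩ calTs s = ∅)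

/-- `F_{(α₃,α₄)}(s)`. -/
def Ffull (α₃ α₄ : Zsqrtd 2) (C₁ s : ℝ) : ℝ :=
  (Real.sqrt s)⁻¹ *
    ∫ z₂ in Set.Ioo (-Real.sqrt (s / thetaHat)) (Real.sqrt (s / thetaHat)), ∫ w in Wp,
      ∫ x in Bbox α₃ α₄ C₁ s, ind (latimage (hfull s z₂ w x.1 x.2) ∩ calTs s = ∅)

/-- `v₁ = (α₃, α₄, σ(α₃), σ(α₄))`. -/
def vv1 (α₃ α₄ : Zsqrtd 2) : Fin 4 → ℝ := ![emb α₃, emb α₄, embc α₃, embc α₄]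

/-- `v₂ = (√2α₃, √2α₄, −√2σ(α₃), −√2σ(α₄))`. -/
def vv2 (α₃ α₄ : Zsqrtd 2) : Fin 4 → ℝ :=
  ![Real.sqrt 2 * emb α₃, Real.sqrt 2 * emb α₄,
    -(Real.sqrt 2 * embc α₃), -(Real.sqrt 2 * embc α₄)]

/-- `b₁ = (α₃, α₄, 0, 0)`. -/
def bb1 (α₃ α₄ : Zsqrtd 2) : Fin 4 → ℝ := ![emb α₃, emb α₄, 0, 0]

/-- `b₂ = (0, 0, σ(α₃), σ(α₄))`. -/
def bb2 (α₃ α₄ : Zsqrtd 2) : Fin 4 → ℝ := ![0, 0, embc α₃, embc α₄]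

/-- The subgrid `𝓛_v = v + ℤv₁ + ℤv₂`. -/
def Lv (α₃ α₄ : Zsqrtd 2) (v : Fin 4 → ℝ) : Set (Fin 4 → ℝ) :=
  {u | ∃ m n : ℤ, u = v + (m:ℝ) • vv1 α₃ α₄ + (n:ℝ) • vv2 α₃ α₄}

/-- The filled plane `Π_v = v + ℝb₁ + ℝb₂`. -/
def Piv (α₃ α₄ : Zsqrtd 2) (v : Fin 4 → ℝ) : Set (Fin 4 → ℝ) :=
  {u | ∃ c₁ c₂ : ℝ, u = v + c₁ • bb1 α₃ α₄ + c₂ • bb2 α₃ α₄}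

/-- `d(s) = θ̂^{−1/2}λ^{−2r}s^{1/2}`. -/
def ds (s : ℝ) : ℝ := lam ^ (-(2 * rr s)) * Real.sqrt (s / thetaHat)

/-- The explicit integral representation `Φ(s)` of the limiting gap distribution `F(s)`. -/
def Phi (s : ℝ) : ℝ :=
  (1 / ((2:ℝ) ^ ((11:ℝ)/2) * Real.sqrt thetaHat * zetaK2 * Real.sqrt s)) *
    ∫ z₂ in Set.Ioo (-Real.sqrt (s / thetaHat)) (Real.sqrt (s / thetaHat)), ∫ w in Wp,
      ∫ x in Fdom, ind (latimage (hfull s z₂ w x.1 x.2) ∩ calTs s = ∅)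



lemma emb_comb (a b c d : Zsqrtd 2) :
    emb (-a * b + c * d) = -emb a * emb b + emb c * emb d := by
  simp only [emb, Zsqrtd.re_add, Zsqrtd.im_add, Zsqrtd.re_neg, Zsqrtd.im_neg,
    Zsqrtd.re_mul, Zsqrtd.im_mul]
  push_cast
  linear_combination ((a.im:ℝ) * b.im - (c.im:ℝ) * d.im) * Real.sq_sqrt (show (0:ℝ) ≤ 2 by norm_num)

lemma embc_comb (a b c d : Zsqrtd 2) :
    embc (-a * b + c * d) = -embc a * embc b + embc c * embc d := by
  simp only [embc, Zsqrtd.re_add, Zsqrtd.im_add, Zsqrtd.re_neg, Zsqrtd.im_neg,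
    Zsqrtd.re_mul, Zsqrtd.im_mul]
  push_cast
  linear_combination ((a.im:ℝ) * b.im - (c.im:ℝ) * d.im) * Real.sq_sqrt (show (0:ℝ) ≤ 2 by norm_num)

lemma embc_ne_zero {α : Zsqrtd 2} (h : emb α ≠ 0) : embc α ≠ 0 := by
  intro h0
  unfold embc at h0
  by_cases him : α.im = 0
  · apply h
    unfold emb
    rw [him] at h0 ⊢
    simpa using h0
  · have hs2 : Real.sqrt 2 = (α.re : ℝ) / (α.im : ℝ) := by
      field_simp at h0 ⊢
      linarith
    have hirr : Irrational (Real.sqrt 2) := irrational_sqrt_two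
    rw [hs2] at hirr
    exact hirr ⟨(α.re : ℚ) / (α.im : ℚ), by push_cast; ring⟩

lemma mul2_mul2 (p : ℝ × ℝ) (M N : Matrix (Fin 2) (Fin 2) ℝ) :
    mul2 (mul2 p M) N = mul2 p (M * N) := by
  simp [mul2, Matrix.mul_apply, Fin.sum_univ_two]
  constructor <;> ring

lemma mul2_one (p : ℝ × ℝ) : mul2 p 1 = p := by
  simp [mul2, Matrix.one_apply]

lemma kmat_mul_kmat_neg (θ : ℝ) : kmat θ * kmat (-θ) = 1 := by
  ext i j
  fin_cases i <;> fin_cases j <;>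
    simp [kmat, Matrix.mul_apply, Fin.sum_univ_two, Real.sin_neg, Real.cos_neg,
      Matrix.one_apply] <;>
    nlinarith [Real.sin_sq_add_cos_sq θ]

lemma kmat_neg_mul_kmat (θ : ℝ) : kmat (-θ) * kmat θ = 1 := by
  have := kmat_mul_kmat_neg (-θ)
  simpa using this

lemma nmat_mul_nmat (x u : ℝ) : nmat x * nmat u = nmat (x + u) := by
  ext i j; fin_cases i <;> fin_cases j <;>
    simp [nmat, Matrix.mul_apply, Fin.sum_univ_two] <;> ring

lemma amat_inv_mul (y : ℝ) (hy : y ≠ 0) : amat y⁻¹ * amat y = 1 := by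
  ext i j; fin_cases i <;> fin_cases j <;>
    simp [amat, Matrix.mul_apply, Fin.sum_univ_two, Matrix.one_apply, inv_inv,
      inv_mul_cancel₀ hy, mul_inv_cancel₀ hy]

lemma Eid (a3 a4 x y θ q1 q2 : ℝ) (ha3 : a3 ≠ 0) (hy : y ≠ 0) :
    a3 * y * (mul2 (mul2 (mul2 (q1, q2) (nmat x * amat y * kmat θ)) (kmat (-θ)))
      (nmat (-((a3 * x + a4) / (a3 * y ^ 2))))).2 = -a4 * q1 + a3 * q2 := by
  rw [mul2_mul2, mul2_mul2]
  rw [show (nmat x * amat y * kmat θ) * (kmat (-θ) * nmat (-((a3 * x + a4) / (a3 * y ^ 2))))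
      = nmat x * amat y * nmat (-((a3 * x + a4) / (a3 * y ^ 2))) by
    rw [mul_assoc (nmat x * amat y), ← mul_assoc (kmat θ), kmat_mul_kmat_neg, one_mul]]
  simp only [mul2, nmat, amat, Matrix.mul_apply, Fin.sum_univ_two, Matrix.cons_val',
    Matrix.cons_val_zero, Matrix.cons_val_one, Matrix.head_cons, Matrix.head_fin_const,
    Matrix.empty_val', Matrix.cons_val_fin_one, Matrix.of_apply]
  field_simp
  ring

lemma inv_id (x y θ : ℝ) (hy : y ≠ 0) (w : ℝ × ℝ) :
    mul2 (mul2 (mul2 (mul2 w (kmat (-θ))) (amat y⁻¹)) (nmat (-x)))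
      (nmat x * amat y * kmat θ) = w := by
  rw [mul2_mul2, mul2_mul2, mul2_mul2]
  have hn0 : nmat (-x) * nmat x = 1 := by
    rw [nmat_mul_nmat]
    ext i j; fin_cases i <;> fin_cases j <;> simp [nmat, Matrix.one_apply]
  have h1 : nmat (-x) * (nmat x * amat y * kmat θ) = amat y * kmat θ := by
    rw [← mul_assoc, ← mul_assoc, hn0, one_mul]
  have h2 : amat y⁻¹ * (nmat (-x) * (nmat x * amat y * kmat θ)) = kmat θ := by
    rw [h1, ← mul_assoc, amat_inv_mul y hy, one_mul]
  have h3 : kmat (-θ) * (amat y⁻¹ * (nmat (-x) * (nmat x * amat y * kmat θ))) = 1 := by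
    rw [h2, kmat_neg_mul_kmat]
  rw [h3, mul2_one]

lemma key (a3 a4 b1 b2 x y θ sc : ℝ) (ha3 : a3 ≠ 0) (hy : 0 < y) (hsc : 0 < sc)
    (T : Set (ℝ × ℝ)) :
    (∃ c : ℝ,
      (sc * (mul2 (b1 + c * a3, b2 + c * a4) (nmat x * amat y * kmat θ)).1,
       sc * (mul2 (b1 + c * a3, b2 + c * a4) (nmat x * amat y * kmat θ)).2) ∈ T)
    ↔ ∃ p ∈ T, (-a4 * b1 + a3 * b2) = a3 * y *
        (mul2 (mul2 (sc⁻¹ • p) (kmat (-θ))) (nmat (-((a3 * x + a4) / (a3 * y ^ 2))))).2 := by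
  have hy0 : y ≠ 0 := ne_of_gt hy
  have hsc0 : sc ≠ 0 := ne_of_gt hsc
  constructor
  · rintro ⟨c, hc⟩
    refine ⟨_, hc, ?_⟩
    have hpair : sc⁻¹ • (sc * (mul2 (b1 + c * a3, b2 + c * a4) (nmat x * amat y * kmat θ)).1,
        sc * (mul2 (b1 + c * a3, b2 + c * a4) (nmat x * amat y * kmat θ)).2)
        = mul2 (b1 + c * a3, b2 + c * a4) (nmat x * amat y * kmat θ) := by
      ext <;> simp [Prod.smul_def, smul_eq_mul] <;> field_simp
    rw [hpair, show mul2 (b1 + c * a3, b2 + c * a4) (nmat x * amat y * kmat θ) =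
        mul2 ((b1 + c * a3, b2 + c * a4) : ℝ × ℝ) (nmat x * amat y * kmat θ) from rfl,
      Eid a3 a4 x y θ _ _ ha3 hy0]
    ring
  · rintro ⟨p, hp, heq⟩
    set w : ℝ × ℝ := sc⁻¹ • p with hw
    set q : ℝ × ℝ := mul2 (mul2 (mul2 w (kmat (-θ))) (amat y⁻¹)) (nmat (-x)) with hqdef
    have hinv : mul2 q (nmat x * amat y * kmat θ) = w := inv_id x y θ hy0 w
    have hEq : -a4 * b1 + a3 * b2 = -a4 * q.1 + a3 * q.2 := by
      have := Eid a3 a4 x y θ q.1 q.2 ha3 hy0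
      rw [show ((q.1, q.2) : ℝ × ℝ) = q from rfl, hinv] at this
      rw [heq, ← this]
    refine ⟨(q.1 - b1) / a3, ?_⟩
    have hq1 : b1 + (q.1 - b1) / a3 * a3 = q.1 := by field_simp; ring
    have hq2 : b2 + (q.1 - b1) / a3 * a4 = q.2 := by
      field_simp
      linear_combination hEq
    have hqq : ((b1 + (q.1 - b1) / a3 * a3, b2 + (q.1 - b1) / a3 * a4) : ℝ × ℝ) = q := by
      rw [hq1, hq2]
    rw [hqq, hinv]
    have hfin : (sc * w.1, sc * w.2) = p := by
      ext <;> simp [hw, Prod.smul_def, smul_eq_mul] <;> field_simp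
    rw [hfin]
    exact hp

lemma vecMul_comp (α₃ α₄ β₁ β₂ : Zsqrtd 2) (c₁ c₂ x₁ x₂ y₁ y₂ θ₁ θ₂ : ℝ) :
    Matrix.vecMul (latvec β₁ β₂ + c₁ • bb1 α₃ α₄ + c₂ • bb2 α₃ α₄) (hmat x₁ x₂ y₁ y₂ θ₁ θ₂)
    = ![(mul2 (emb β₁ + c₁ * emb α₃, emb β₂ + c₁ * emb α₄) (nmat x₁ * amat y₁ * kmat θ₁)).1,
        (mul2 (emb β₁ + c₁ * emb α₃, emb β₂ + c₁ * emb α₄) (nmat x₁ * amat y₁ * kmat θ₁)).2,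
        (mul2 (embc β₁ + c₂ * embc α₃, embc β₂ + c₂ * embc α₄) (nmat x₂ * amat y₂ * kmat θ₂)).1,
        (mul2 (embc β₁ + c₂ * embc α₃, embc β₂ + c₂ * embc α₄) (nmat x₂ * amat y₂ * kmat θ₂)).2] := by
  funext i
  fin_cases i <;>
    simp [Matrix.vecMul, hmat, bd, latvec, bb1, bb2, mul2, dotProduct,
      Fin.sum_univ_four, Pi.add_apply, Pi.smul_apply, smul_eq_mul, Matrix.vecHead,
      Matrix.vecTail] <;> ring

theorem stmt15 (α₃ α₄ : Zsqrtd 2) (hcop : IsCoprime α₃ α₄) (hpos : 0 < emb α₃)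
    (s : ℝ) (hs : 0 < s) (r : ℤ)
    (hr₁ : lam ^ (2*r) ≤ s ^ ((1:ℝ)/4)) (hr₂ : s ^ ((1:ℝ)/4) < lam ^ (2*r+2))
    (β₁ β₂ : Zsqrtd 2) (x₁ x₂ y₁ y₂ θ₁ θ₂ : ℝ) (hy₁ : 0 < y₁) (hy₂ : 0 < y₂) :
    ((fun u => Matrix.vecMul u (hmat x₁ x₂ y₁ y₂ θ₁ θ₂)) ''
        Piv α₃ α₄ (latvec β₁ β₂)) ∩ calT s r = ∅ ↔
      (emb (-α₄ * β₁ + α₃ * β₂), embc (-α₄ * β₁ + α₃ * β₂)) ∉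
        ({u : ℝ | ∃ p ∈ Tset s, u = emb α₃ * y₁ *
            (mul2 (mul2 ((lam ^ (-(2*r)) : ℝ) • p) (kmat (-θ₁)))
              (nmat (-((emb α₃ * x₁ + emb α₄) / (emb α₃ * y₁ ^ 2))))).2} ×ˢ
         {u : ℝ | ∃ p ∈ Woct, u = embc α₃ * y₂ *
            (mul2 (mul2 ((lam ^ (2*r) : ℝ) • p) (kmat (-θ₂)))
              (nmat (-((embc α₃ * x₂ + embc α₄) / (embc α₃ * y₂ ^ 2))))).2}) := by
  have hl : (0:ℝ) < lam := by
    unfold lam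
    positivity
  have ha3 : emb α₃ ≠ 0 := ne_of_gt hpos
  have ha3' : embc α₃ ≠ 0 := embc_ne_zero ha3
  have hsc1 : (0:ℝ) < lam ^ (2*r) := zpow_pos hl _
  have hsc2 : (0:ℝ) < lam ^ (-(2*r)) := zpow_pos hl _
  have hinv1 : ((lam:ℝ) ^ (2*r))⁻¹ = lam ^ (-(2*r)) := (_root_.zpow_neg lam (2*r)).symm
  have hinv2 : ((lam:ℝ) ^ (-(2*r)))⁻¹ = lam ^ (2*r) := by rw [_root_.zpow_neg, inv_inv]
  have hP := key (emb α₃) (emb α₄) (emb β₁) (emb β₂) x₁ y₁ θ₁ (lam ^ (2*r)) ha3 hy₁ hsc1 (Tset s)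
  rw [hinv1] at hP
  have hQ := key (embc α₃) (embc α₄) (embc β₁) (embc β₂) x₂ y₂ θ₂ (lam ^ (-(2*r))) ha3' hy₂ hsc2
    Woct
  rw [hinv2] at hQ
  rw [Set.eq_empty_iff_forall_notMem]
  constructor
  · intro h hmem
    rw [Set.mem_prod, Set.mem_setOf_eq, Set.mem_setOf_eq, emb_comb, embc_comb] at hmem
    obtain ⟨c₁, h1⟩ := hP.mpr hmem.1
    obtain ⟨c₂, h2⟩ := hQ.mpr hmem.2
    refine h _ ⟨⟨_, ⟨c₁, c₂, rfl⟩, rfl⟩, ?_⟩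
    simp only [calT, Set.mem_setOf_eq, vecMul_comp]
    constructor
    · simpa using h1
    · simpa using h2
  · intro h v hv
    obtain ⟨⟨u, ⟨c₁, c₂, rfl⟩, rfl⟩, hvT⟩ := hv
    simp only [calT, Set.mem_setOf_eq, vecMul_comp] at hvT
    obtain ⟨h1, h2⟩ := hvT
    apply h
    rw [Set.mem_prod, Set.mem_setOf_eq, Set.mem_setOf_eq, emb_comb, embc_comb]
    exact ⟨hP.mp ⟨c₁, by simpa using h1⟩, hQ.mp ⟨c₂, by simpa using h2⟩⟩

end
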